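/- Let U = U_1 ⊕ ... ⊕ U_s ⊆ W be a direct sum of s subspaces of a vector space W, with U-associated matrix condition number κ(U). Let Ũ ⊆ W be a subspace with dist(U, Ũ) < 1, and let Ũ_1,...,Ũ_s ⊆ Ũ satisfy dist(Ũ_i, U_i) ≤ γ < 1 for each i. If 2γ√s·κ(U) < 1, then Ũ = Ũ_1 ⊕ ... ⊕ Ũ_s. -/

import Mathlib

/-- The orthogonal projection onto a subspace, as an endomorphism of the ambient space. -/
noncomputable def projL {n : ℕ} (U : Submodule ℝ (EuclideanSpace ℝ (Fin n))) :
    EuclideanSpace ℝ (Fin n) →L[ℝ] EuclideanSpace ℝ (Fin n) :=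
  U.subtypeL.comp (Submodule.orthogonalProjectionOnto U)

/-- Distance between subspaces: operator norm of the difference of orthogonal projections. -/
noncomputable def distS {n : ℕ} (U V : Submodule ℝ (EuclideanSpace ℝ (Fin n))) : ℝ :=
  ‖projL U - projL V‖

/-- Largest singular value of the matrix whose columns are the vectors `v k`. -/
noncomputable def famSup {n : ℕ} {ι : Type} [Fintype ι] (v : ι → EuclideanSpace ℝ (Fin n)) : ℝ :=
  sSup {r | ∃ c : EuclideanSpace ℝ ι, ‖c‖ = 1 ∧ r = ‖∑ k, c k • v k‖}

/-- Smallest singular value of the matrix whose columns are the vectors `v k`. -/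
noncomputable def famInf {n : ℕ} {ι : Type} [Fintype ι] (v : ι → EuclideanSpace ℝ (Fin n)) : ℝ :=
  sInf {r | ∃ c : EuclideanSpace ℝ ι, ‖c‖ = 1 ∧ r = ‖∑ k, c k • v k‖}

lemma projL_apply_mem {n : ℕ} (A : Submodule ℝ (EuclideanSpace ℝ (Fin n))) (x) :
    projL A x ∈ A := (Submodule.orthogonalProjectionOnto A x).2

lemma projL_eq_self {n : ℕ} {A : Submodule ℝ (EuclideanSpace ℝ (Fin n))} {x}
    (hx : x ∈ A) : projL A x = x := by
  simp only [projL, ContinuousLinearMap.comp_apply, Submodule.subtypeL_apply]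
  exact congrArg Subtype.val (Submodule.orthogonalProjectionOnto_mem_subspace_eq_self (⟨x, hx⟩ : A))

lemma distS_symm {n : ℕ} (A B : Submodule ℝ (EuclideanSpace ℝ (Fin n))) :
    distS A B = distS B A := norm_sub_rev _ _

lemma finrank_le_of_distS_lt_one {n : ℕ} {A B : Submodule ℝ (EuclideanSpace ℝ (Fin n))}
    (h : distS A B < 1) : Module.finrank ℝ A ≤ Module.finrank ℝ B := by
  let f : A →ₗ[ℝ] B := (Submodule.orthogonalProjectionOnto B).toLinearMap.comp A.subtype
  have hinj : Function.Injective f := by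
    rw [← LinearMap.ker_eq_bot, LinearMap.ker_eq_bot']
    intro ⟨x, hx⟩ h0
    have h0' : projL B x = 0 := by
      have hz : (Submodule.orthogonalProjectionOnto B) x = 0 := h0
      simp only [projL, ContinuousLinearMap.comp_apply, Submodule.subtypeL_apply, hz,
        ZeroMemClass.coe_zero]
    by_contra hne
    have hxne : x ≠ 0 := fun hh => hne (Subtype.ext hh)
    have hxn : 0 < ‖x‖ := norm_pos_iff.mpr hxne
    have h1 : ‖x‖ = ‖(projL A - projL B) x‖ := by
      rw [ContinuousLinearMap.sub_apply, projL_eq_self hx, h0', sub_zero]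
    have hle : ‖(projL A - projL B) x‖ ≤ distS A B * ‖x‖ := (projL A - projL B).le_opNorm x
    nlinarith
  exact LinearMap.finrank_le_finrank_of_injective hinj

lemma finrank_eq_of_distS_lt_one {n : ℕ} {A B : Submodule ℝ (EuclideanSpace ℝ (Fin n))}
    (h : distS A B < 1) : Module.finrank ℝ A = Module.finrank ℝ B :=
  le_antisymm (finrank_le_of_distS_lt_one h)
    (finrank_le_of_distS_lt_one (by rwa [distS_symm]))

lemma iSupIndep_of_li {E : Type*} [AddCommGroup E] [Module ℝ E] {s : ℕ} {d : Fin s → ℕ}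
    (w : (Σ i : Fin s, Fin (d i)) → E)
    (hw : LinearIndependent ℝ w)
    (p : Fin s → Submodule ℝ E)
    (hp : ∀ i, p i = Submodule.span ℝ (Set.range fun j : Fin (d i) => w ⟨i, j⟩)) :
    iSupIndep p := by
  classical
  rw [iSupIndep_def]
  intro i
  rw [Submodule.disjoint_def]
  intro x hxi hxs
  have hxs' : x ∈ ⨆ j ∈ Finset.univ.erase i, p j := by
    convert hxs using 2 with j
    · rfl
    · simp [Finset.mem_erase]
  obtain ⟨μ, hμ⟩ := (Submodule.mem_iSup_finset_iff_exists_sum _ _).mp hxs'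
  set y : Fin s → E := fun j => if j = i then x else -(μ j : E) with hy_def
  have hy : ∀ j, y j ∈ p j := by
    intro j
    by_cases h : j = i
    · subst h; simpa [y] using hxi
    · simpa [y, h] using (p j).neg_mem (μ j).2
  have hysum : ∑ j, y j = 0 := by
    rw [← Finset.add_sum_erase _ _ (Finset.mem_univ i)]
    have h1 : y i = x := by simp [y]
    have h2 : ∑ j ∈ Finset.univ.erase i, y j = -x := by
      rw [← hμ, ← Finset.sum_neg_distrib]
      refine Finset.sum_congr rfl fun j hj => ?_
      simp [y, (Finset.mem_erase.mp hj).1]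
    rw [h1, h2, add_neg_cancel]
  have hmem : ∀ j, y j ∈ Submodule.span ℝ (Set.range fun k : Fin (d j) => w ⟨j, k⟩) := by
    intro j; rw [← hp j]; exact hy j
  choose a ha using fun j => (Submodule.mem_span_range_iff_exists_fun ℝ).mp (hmem j)
  set g : (Σ i : Fin s, Fin (d i)) → ℝ := fun q => a q.1 q.2 with hg_def
  have hg : ∑ q, g q • w q = 0 := by
    rw [← Finset.univ_sigma_univ, Finset.sum_sigma]
    calc ∑ j, ∑ k, a j k • w ⟨j, k⟩ = ∑ j, y j := by
          exact Finset.sum_congr rfl fun j _ => ha j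
      _ = 0 := hysum
  have hzero := Fintype.linearIndependent_iff.mp hw g hg
  have : x = y i := by simp [y]
  rw [this, ← ha i]
  refine Finset.sum_eq_zero fun k _ => ?_
  have := hzero ⟨i, k⟩
  simp only [hg_def] at this
  rw [this, zero_smul]

section facts
variable {n : ℕ} {ι : Type} [Fintype ι] [Nonempty ι] (v : ι → EuclideanSpace ℝ (Fin n))

omit [Nonempty ι] in
lemma famSet_eq_image :
    {r | ∃ c : EuclideanSpace ℝ ι, ‖c‖ = 1 ∧ r = ‖∑ k, c k • v k‖}
      = (fun c : EuclideanSpace ℝ ι => ‖∑ k, c k • v k‖) '' Metric.sphere 0 1 := by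
  ext r
  simp only [Set.mem_setOf_eq, Set.mem_image, mem_sphere_zero_iff_norm]
  exact ⟨fun ⟨c, h1, h2⟩ => ⟨c, h1, h2.symm⟩, fun ⟨c, h1, h2⟩ => ⟨c, h1, h2.symm⟩⟩

omit [Nonempty ι] in
lemma famSet_compact :
    IsCompact {r | ∃ c : EuclideanSpace ℝ ι, ‖c‖ = 1 ∧ r = ‖∑ k, c k • v k‖} := by
  rw [famSet_eq_image]
  apply (isCompact_sphere (0 : EuclideanSpace ℝ ι) 1).image
  fun_prop

lemma famSet_nonempty :
    {r | ∃ c : EuclideanSpace ℝ ι, ‖c‖ = 1 ∧ r = ‖∑ k, c k • v k‖}.Nonempty := by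
  rw [famSet_eq_image]
  exact (NormedSpace.sphere_nonempty.mpr zero_le_one).image _

lemma famInf_mem : famInf v ∈
    {r | ∃ c : EuclideanSpace ℝ ι, ‖c‖ = 1 ∧ r = ‖∑ k, c k • v k‖} :=
  (famSet_compact v).sInf_mem (famSet_nonempty v)

omit [Nonempty ι] in
lemma famInf_le (c : EuclideanSpace ℝ ι) (hc : ‖c‖ = 1) :
    famInf v ≤ ‖∑ k, c k • v k‖ :=
  csInf_le ((famSet_compact v).bddBelow) ⟨c, hc, rfl⟩

omit [Nonempty ι] in
lemma le_famSup (c : EuclideanSpace ℝ ι) (hc : ‖c‖ = 1) :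
    ‖∑ k, c k • v k‖ ≤ famSup v :=
  le_csSup ((famSet_compact v).bddAbove) ⟨c, hc, rfl⟩

lemma famInf_pos (hv : LinearIndependent ℝ v) : 0 < famInf v := by
  obtain ⟨c, hc1, hc2⟩ := famInf_mem v
  have hcne : c ≠ 0 := fun h => by simp [h] at hc1
  have hsne : ∑ k, c k • v k ≠ 0 := by
    intro h
    exact hcne (by ext k; exact Fintype.linearIndependent_iff.mp hv c h k)
  rw [hc2]
  exact norm_pos_iff.mpr hsne

omit [Nonempty ι] in
lemma famInf_mul_norm_le (c : EuclideanSpace ℝ ι) :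
    famInf v * ‖c‖ ≤ ‖∑ k, c k • v k‖ := by
  rcases eq_or_ne c 0 with rfl | hc
  · simp
  · have hcn : 0 < ‖c‖ := norm_pos_iff.mpr hc
    set u : EuclideanSpace ℝ ι := ‖c‖⁻¹ • c with hu
    have hun : ‖u‖ = 1 := by
      rw [hu, norm_smul, norm_inv, norm_norm, inv_mul_cancel₀ hcn.ne']
    have hle := famInf_le v u hun
    have hsum : ∑ k, u k • v k = ‖c‖⁻¹ • ∑ k, c k • v k := by
      rw [Finset.smul_sum]
      refine Finset.sum_congr rfl fun k _ => ?_
      rw [hu, PiLp.smul_apply, smul_eq_mul, mul_smul]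
    rw [hsum, norm_smul, norm_inv, norm_norm] at hle
    rw [mul_comm]
    calc ‖c‖ * famInf v ≤ ‖c‖ * (‖c‖⁻¹ * ‖∑ k, c k • v k‖) :=
          mul_le_mul_of_nonneg_left hle hcn.le
      _ = ‖∑ k, c k • v k‖ := by field_simp

end facts

theorem stmt6 {n s : ℕ} (γ κ : ℝ) (d : Fin s → ℕ)
    (U Uti : Fin s → Submodule ℝ (EuclideanSpace ℝ (Fin n)))
    (Ut : Submodule ℝ (EuclideanSpace ℝ (Fin n)))
    (hIndep : iSupIndep U)
    -- `v` lists the columns of a `U`-associated matrix: the `i`-th block of columns is an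
    -- orthonormal basis of `U i`.
    (v : (Σ i : Fin s, Fin (d i)) → EuclideanSpace ℝ (Fin n))
    (hON : ∀ i : Fin s, Orthonormal ℝ (fun j : Fin (d i) => v ⟨i, j⟩))
    (hspan : ∀ i : Fin s,
      Submodule.span ℝ (Set.range fun j : Fin (d i) => v ⟨i, j⟩) = U i)
    -- `κ` is the condition number of the associated matrix
    (hκ : κ = famSup v / famInf v)
    (hdist : distS (⨆ i, U i) Ut < 1)
    (hsub : ∀ i, Uti i ≤ Ut)
    (hγ : γ < 1)
    (hclose : ∀ i, distS (Uti i) (U i) ≤ γ)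
    (hcond : 2 * γ * Real.sqrt s * κ < 1) :
    iSupIndep Uti ∧ (⨆ i, Uti i) = Ut := by
  classical
  by_cases hempty : IsEmpty (Σ i : Fin s, Fin (d i))
  · -- trivial case: all subspaces are zero
    have hfe : ∀ i : Fin s, IsEmpty (Fin (d i)) := fun i => ⟨fun j => hempty.false ⟨i, j⟩⟩
    have hUbot : ∀ i, U i = ⊥ := by
      intro i
      rw [← hspan i]
      haveI := hfe i
      rw [Set.range_eq_empty, Submodule.span_empty]
    have hsupbot : (⨆ i, U i) = ⊥ := by simp [hUbot]
    have hUt : Ut = ⊥ := by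
      have h1 : Module.finrank ℝ Ut ≤ Module.finrank ℝ ↥(⨆ i, U i) :=
        finrank_le_of_distS_lt_one (by rwa [distS_symm])
      rw [hsupbot, finrank_bot] at h1
      rw [← Submodule.finrank_eq_zero (R := ℝ) (M := EuclideanSpace ℝ (Fin n))]
      omega
    have hUti : ∀ i, Uti i = ⊥ := fun i => le_bot_iff.mp (hUt ▸ hsub i)
    constructor
    · intro i
      rw [hUti i]
      exact disjoint_bot_left
    · rw [hUt]
      simp [hUti]
  · -- main case
    haveI hne : Nonempty (Σ i : Fin s, Fin (d i)) := not_isEmpty_iff.mp hempty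
    obtain ⟨k₀⟩ := hne
    haveI : Nonempty (Σ i : Fin s, Fin (d i)) := ⟨k₀⟩
    have hγ0 : 0 ≤ γ := le_trans (norm_nonneg _) (hclose k₀.1)
    -- linear independence of the full family v
    have hLIv : LinearIndependent ℝ v := by
      have h := linearIndependent_iUnion_finite (R := ℝ)
        (f := fun i (j : Fin (d i)) => v ⟨i, j⟩)
        (fun i => (hON i).linearIndependent)
        (fun i t _ hit => by
          rw [hspan i]
          refine Disjoint.mono_right ?_ (iSupIndep_def.mp hIndep i)
          refine iSup₂_le fun j hj => ?_
          rw [hspan j]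
          exact le_iSup₂ (f := fun (k : Fin s) (_ : k ≠ i) => U k) j
            (fun h => hit (h ▸ hj)))
      exact h
    -- dimensions
    have hrU : ∀ i, Module.finrank ℝ (U i) = d i := fun i => by
      rw [← hspan i, finrank_span_eq_card (hON i).linearIndependent, Fintype.card_fin]
    have hrUti : ∀ i, Module.finrank ℝ (Uti i) = d i := fun i => by
      rw [← hrU i]
      exact finrank_eq_of_distS_lt_one (lt_of_le_of_lt (hclose i) hγ)
    -- famSup ≥ 1
    have hv1 : ‖v k₀‖ = 1 := (hON k₀.1).1 k₀.2
    have hone : (1 : ℝ) ≤ famSup v := by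
      have hs1 : ∑ k, (EuclideanSpace.single k₀ (1:ℝ)) k • v k = v k₀ := by
        rw [Finset.sum_eq_single k₀]
        · simp [EuclideanSpace.single_apply]
        · intro b _ hb
          simp [EuclideanSpace.single_apply, hb]
        · simp
      have h := le_famSup v (EuclideanSpace.single k₀ 1)
        (by simp [EuclideanSpace.norm_single])
      rwa [hs1, hv1] at h
    have hIpos : 0 < famInf v := famInf_pos v hLIv
    -- γ √s < famInf
    have hγs : γ * Real.sqrt s < famInf v := by
      rw [hκ, ← mul_div_assoc] at hcond
      have h2 := (div_lt_one hIpos).mp hcond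
      nlinarith [mul_le_mul_of_nonneg_left hone (mul_nonneg hγ0 (Real.sqrt_nonneg (s:ℝ))),
        mul_nonneg (mul_nonneg hγ0 (Real.sqrt_nonneg (s:ℝ))) (zero_le_one.trans hone)]
    -- perturbed family
    set vt : (Σ i : Fin s, Fin (d i)) → EuclideanSpace ℝ (Fin n) :=
      fun q => projL (Uti q.1) (v q) with hvt
    have hvmem : ∀ q : (Σ i : Fin s, Fin (d i)), v q ∈ U q.1 := fun q => by
      rw [← hspan q.1]
      exact Submodule.subset_span ⟨q.2, rfl⟩
    have hdv : ∀ q, vt q - v q = (projL (Uti q.1) - projL (U q.1)) (v q) := fun q => by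
      rw [ContinuousLinearMap.sub_apply, projL_eq_self (hvmem q)]
    -- key estimate
    have hkey : ∀ c : EuclideanSpace ℝ (Σ i : Fin s, Fin (d i)),
        ‖∑ q, c q • (vt q - v q)‖ ≤ γ * Real.sqrt s * ‖c‖ := by
      intro c
      set t : Fin s → ℝ := fun i => ∑ j, c ⟨i, j⟩ ^ 2 with ht
      have htnn : ∀ i, 0 ≤ t i := fun i => Finset.sum_nonneg fun j _ => sq_nonneg _
      have hw : ∀ i : Fin s, ‖∑ j, c ⟨i, j⟩ • v ⟨i, j⟩‖ = Real.sqrt (t i) := by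
        intro i
        have h2 : ‖∑ j, c ⟨i, j⟩ • v ⟨i, j⟩‖ ^ 2 = t i := by
          rw [← real_inner_self_eq_norm_sq]
          rw [Orthonormal.inner_sum (hON i) (fun j => c ⟨i, j⟩) (fun j => c ⟨i, j⟩)]
          simp [ht, sq]
        rw [← h2, Real.sqrt_sq (norm_nonneg _)]
      have hblock : ∀ i : Fin s,
          ‖∑ j, c ⟨i, j⟩ • (vt ⟨i, j⟩ - v ⟨i, j⟩)‖ ≤ γ * Real.sqrt (t i) := by
        intro i
        have heq : ∑ j, c ⟨i, j⟩ • (vt ⟨i, j⟩ - v ⟨i, j⟩)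
            = (projL (Uti i) - projL (U i)) (∑ j, c ⟨i, j⟩ • v ⟨i, j⟩) := by
          rw [map_sum]
          refine Finset.sum_congr rfl fun j _ => ?_
          rw [map_smul, ← hdv ⟨i, j⟩]
        rw [heq]
        calc ‖(projL (Uti i) - projL (U i)) (∑ j, c ⟨i, j⟩ • v ⟨i, j⟩)‖
            ≤ ‖projL (Uti i) - projL (U i)‖ * ‖∑ j, c ⟨i, j⟩ • v ⟨i, j⟩‖ :=
              (projL (Uti i) - projL (U i)).le_opNorm _
          _ ≤ γ * Real.sqrt (t i) :=
              mul_le_mul (hclose i) (le_of_eq (hw i)) (norm_nonneg _) hγ0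
      have hsplit : ∑ q, c q • (vt q - v q)
          = ∑ i, ∑ j, c ⟨i, j⟩ • (vt ⟨i, j⟩ - v ⟨i, j⟩) := by
        rw [← Finset.univ_sigma_univ, Finset.sum_sigma]
      have hc2 : ‖c‖ ^ 2 = ∑ i, t i := by
        have hnn : (0:ℝ) ≤ ∑ q, ‖c q‖ ^ 2 := Finset.sum_nonneg fun q _ => sq_nonneg _
        rw [EuclideanSpace.norm_eq, Real.sq_sqrt hnn, ← Finset.univ_sigma_univ,
          Finset.sum_sigma]
        simp [ht, Real.norm_eq_abs, sq_abs]
      have hCS : ∑ i, Real.sqrt (t i) ≤ Real.sqrt s * ‖c‖ := by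
        have hsq : (∑ i, Real.sqrt (t i)) ^ 2 ≤ (s : ℝ) * ‖c‖ ^ 2 := by
          calc (∑ i, Real.sqrt (t i)) ^ 2
              ≤ (Finset.univ.card : ℝ) * ∑ i, Real.sqrt (t i) ^ 2 :=
                sq_sum_le_card_mul_sum_sq
            _ = (s : ℝ) * ‖c‖ ^ 2 := by
                rw [hc2, Finset.card_univ, Fintype.card_fin]
                congr 1
                exact Finset.sum_congr rfl fun i _ => Real.sq_sqrt (htnn i)
        have h1 : 0 ≤ ∑ i, Real.sqrt (t i) := Finset.sum_nonneg fun i _ => Real.sqrt_nonneg _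
        calc ∑ i, Real.sqrt (t i) = Real.sqrt ((∑ i, Real.sqrt (t i)) ^ 2) :=
              (Real.sqrt_sq h1).symm
          _ ≤ Real.sqrt ((s : ℝ) * ‖c‖ ^ 2) := Real.sqrt_le_sqrt hsq
          _ = Real.sqrt s * ‖c‖ := by
              rw [Real.sqrt_mul (Nat.cast_nonneg s), Real.sqrt_sq (norm_nonneg _)]
      calc ‖∑ q, c q • (vt q - v q)‖
          = ‖∑ i, ∑ j, c ⟨i, j⟩ • (vt ⟨i, j⟩ - v ⟨i, j⟩)‖ := by rw [hsplit]
        _ ≤ ∑ i, ‖∑ j, c ⟨i, j⟩ • (vt ⟨i, j⟩ - v ⟨i, j⟩)‖ := norm_sum_le _ _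
        _ ≤ ∑ i, γ * Real.sqrt (t i) := Finset.sum_le_sum fun i _ => hblock i
        _ = γ * ∑ i, Real.sqrt (t i) := (Finset.mul_sum _ _ _).symm
        _ ≤ γ * (Real.sqrt s * ‖c‖) :=
            mul_le_mul_of_nonneg_left hCS hγ0
        _ = γ * Real.sqrt s * ‖c‖ := (mul_assoc _ _ _).symm
    -- linear independence of vt
    have hLIvt : LinearIndependent ℝ vt := by
      rw [Fintype.linearIndependent_iff]
      intro g hg
      by_contra hgneq
      push_neg at hgneq
      obtain ⟨q₀, hq₀⟩ := hgneq
      set c : EuclideanSpace ℝ (Σ i : Fin s, Fin (d i)) := WithLp.toLp 2 g with hcdef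
      have hcne : c ≠ 0 := fun h => hq₀ (congrArg (fun c : EuclideanSpace ℝ (Σ i : Fin s, Fin (d i)) => c q₀) h)
      have hcn : 0 < ‖c‖ := norm_pos_iff.mpr hcne
      have heq : ∑ q, c q • v q = -∑ q, c q • (vt q - v q) := by
        have : ∑ q, c q • v q + ∑ q, c q • (vt q - v q) = ∑ q, c q • vt q := by
          rw [← Finset.sum_add_distrib]
          refine Finset.sum_congr rfl fun q _ => ?_
          rw [← smul_add, add_sub_cancel]
        rw [eq_neg_iff_add_eq_zero, this, hg]
      have h1 : famInf v * ‖c‖ ≤ ‖∑ q, c q • v q‖ := famInf_mul_norm_le v c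
      have h2 : ‖∑ q, c q • v q‖ ≤ γ * Real.sqrt s * ‖c‖ := by
        rw [heq, norm_neg]
        exact hkey c
      nlinarith
    -- spans of blocks of vt
    have hvtmem : ∀ q : (Σ i : Fin s, Fin (d i)), vt q ∈ Uti q.1 := fun q =>
      projL_apply_mem _ _
    have hspan_vt : ∀ i, Submodule.span ℝ (Set.range fun j : Fin (d i) => vt ⟨i, j⟩)
        = Uti i := by
      intro i
      have hle : Submodule.span ℝ (Set.range fun j : Fin (d i) => vt ⟨i, j⟩) ≤ Uti i := by
        rw [Submodule.span_le]
        rintro x ⟨j, rfl⟩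
        exact hvtmem ⟨i, j⟩
      have hLIblock : LinearIndependent ℝ (fun j : Fin (d i) => vt ⟨i, j⟩) :=
        hLIvt.comp (Sigma.mk i) sigma_mk_injective
      have hr : Module.finrank ℝ
          (Submodule.span ℝ (Set.range fun j : Fin (d i) => vt ⟨i, j⟩)) = d i := by
        rw [finrank_span_eq_card hLIblock, Fintype.card_fin]
      exact Submodule.eq_of_le_of_finrank_le hle (by rw [hr, hrUti i])
    refine ⟨iSupIndep_of_li vt hLIvt Uti (fun i => (hspan_vt i).symm), ?_⟩
    -- equality of subspaces
    have hle : (⨆ i, Uti i) ≤ Ut := iSup_le hsub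
    have hsupU : (⨆ i, U i) = Submodule.span ℝ (Set.range v) := by
      rw [Set.range_sigma_eq_iUnion_range, Submodule.span_iUnion]
      exact (iSup_congr hspan).symm
    have hsupUti : (⨆ i, Uti i) = Submodule.span ℝ (Set.range vt) := by
      rw [Set.range_sigma_eq_iUnion_range, Submodule.span_iUnion]
      exact (iSup_congr hspan_vt).symm
    have hrt : Module.finrank ℝ Ut = Module.finrank ℝ ↥(⨆ i, Uti i) := by
      rw [← finrank_eq_of_distS_lt_one hdist, hsupU, hsupUti,
        finrank_span_eq_card hLIv, finrank_span_eq_card hLIvt]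
    exact Submodule.eq_of_le_of_finrank_le hle (le_of_eq hrt)
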